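/- Let X be a real random variable with P(X = 5/4) = 1/2 and, conditionally on the other half of the mass, X uniform on [0,1]; let Y = 1 when X = 5/4 and Y = -1 when X ∈ [0,1]. For the linear model f(x;a,b) = ax + b, consider the population quadratic loss L(a,b) = E[(1 - Y·f(X;a,b))²]. Then the unique minimizer (a*,b*) of L satisfies P(Y ≠ sgn(a*X + b*)) ≥ 1/16, even though the distribution is linearly separable (Y·(X - 9/8) > 0 almost surely has the same sign pattern achievable by a linear classifier). -/

import Mathlib

open MeasureTheory

/-- The joint distribution of Example 1: with probability 1/2 the sample is `(5/4, 1)`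
(positive class), and with probability 1/2 the first coordinate is uniform on `[0,1]`
and the label is `-1`. -/
noncomputable def exampleMeasure : Measure (ℝ × ℝ) :=
  (1 / 2 : ENNReal) • Measure.dirac ((5 / 4 : ℝ), (1 : ℝ)) +
  (1 / 2 : ENNReal) • Measure.map (fun x : ℝ => (x, (-1 : ℝ)))
    (volume.restrict (Set.Icc (0 : ℝ) 1))


lemma uniform_part (a b : ℝ) :
    ∫ x in Set.Icc (0:ℝ) 1, (1 + (a * x + b)) ^ 2 = a^2/3 + a*(1+b) + (1+b)^2 := by
  rw [integral_Icc_eq_integral_Ioc, ← intervalIntegral.integral_of_le (by norm_num : (0:ℝ) ≤ 1)]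
  have hd : ∀ x ∈ Set.uIcc (0:ℝ) 1,
      HasDerivAt (fun x => a^2/3 * x^3 + a*(1+b) * x^2 + (1+b)^2 * x)
        ((1 + (a * x + b)) ^ 2) x := by
    intro x _
    have h1 : HasDerivAt (fun x : ℝ => a^2/3 * x^3) (a^2/3 * (3 * x^2)) x := by
      simpa using (hasDerivAt_pow 3 x).const_mul (a^2/3)
    have h2 : HasDerivAt (fun x : ℝ => a*(1+b) * x^2) (a*(1+b) * (2 * x)) x := by
      simpa using (hasDerivAt_pow 2 x).const_mul (a*(1+b))
    have h3 : HasDerivAt (fun x : ℝ => (1+b)^2 * x) ((1+b)^2) x := by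
      simpa using (hasDerivAt_id x).const_mul ((1+b)^2)
    have := (h1.add h2).add h3
    refine this.congr_deriv ?_
    ring
  rw [intervalIntegral.integral_eq_sub_of_hasDerivAt hd
    (by apply Continuous.intervalIntegrable; continuity)]
  ring

lemma loss_eq (a b : ℝ) :
    (∫ p, (1 - p.2 * (a * p.1 + b)) ^ 2 ∂exampleMeasure) =
      1/2 * (1 - (a * (5/4) + b))^2 + 1/2 * (a^2/3 + a*(1+b) + (1+b)^2) := by
  have hf : Continuous (fun p : ℝ × ℝ => (1 - p.2 * (a * p.1 + b)) ^ 2) := by continuity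
  have hmap : Continuous (fun x : ℝ => (x, (-1 : ℝ))) := by continuity
  have hint1 : Integrable (fun p : ℝ × ℝ => (1 - p.2 * (a * p.1 + b)) ^ 2)
      ((1/2 : ENNReal) • Measure.dirac ((5/4 : ℝ), (1 : ℝ))) := by
    exact ((integrable_const _).congr (ae_eq_dirac _).symm).smul_measure (by norm_num)
  have hint2 : Integrable (fun p : ℝ × ℝ => (1 - p.2 * (a * p.1 + b)) ^ 2)
      ((1/2 : ENNReal) • Measure.map (fun x : ℝ => (x, (-1 : ℝ)))
        (volume.restrict (Set.Icc (0:ℝ) 1))) := by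
    refine Integrable.smul_measure ?_ (by norm_num)
    rw [integrable_map_measure (hf.aestronglyMeasurable) hmap.measurable.aemeasurable]
    exact ((by continuity : Continuous fun x : ℝ => (1 - (-1) * (a * x + b)) ^ 2).integrableOn_Icc)
  rw [exampleMeasure, integral_add_measure hint1 hint2, integral_smul_measure,
    integral_smul_measure, integral_dirac,
    integral_map hmap.measurable.aemeasurable hf.aestronglyMeasurable]
  simp only [smul_eq_mul]
  have h2 : ∫ x in Set.Icc (0:ℝ) 1, (1 - (-1) * (a * x + b)) ^ 2
      = a^2/3 + a*(1+b) + (1+b)^2 := by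
    rw [← uniform_part a b]; congr 1; ext x; ring
  rw [h2]
  norm_num

/-- Every global minimizer `(a*, b*)` of the population quadratic loss
`E[(1 - Y (aX + b))²]` for the linear model misclassifies with probability at
least `1/16`. -/
theorem quadratic_loss_global_min_misclassifies
    (a b : ℝ)
    (hmin : ∀ a' b' : ℝ,
      (∫ p, (1 - p.2 * (a * p.1 + b)) ^ 2 ∂exampleMeasure) ≤
      (∫ p, (1 - p.2 * (a' * p.1 + b')) ^ 2 ∂exampleMeasure)) :
    (1 / 16 : ENNReal) ≤
      exampleMeasure {p : ℝ × ℝ | p.2 ≠ (if 0 ≤ a * p.1 + b then (1 : ℝ) else -1)} := by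
  -- Step 1: identify the minimizer
  have hle := hmin (72/35) (-9/5)
  rw [loss_eq, loss_eq] at hle
  have hident :
      1/2 * (1 - (a * (5/4) + b))^2 + 1/2 * (a^2/3 + a*(1+b) + (1+b)^2)
      = (1/2 * (1 - ((72/35) * (5/4) + (-9/5)))^2
          + 1/2 * ((72/35)^2/3 + (72/35)*(1+(-9/5)) + (1+(-9/5))^2))
        + ((b + 9/5) + 7/8 * (a - 72/35))^2 + 35/192 * (a - 72/35)^2 := by ring
  have hsq : ((b + 9/5) + 7/8 * (a - 72/35))^2 + 35/192 * (a - 72/35)^2 ≤ 0 := by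
    nlinarith [hle, hident]
  have ha : a = 72/35 := by nlinarith [sq_nonneg ((b + 9/5) + 7/8 * (a - 72/35)), sq_nonneg (a - 72/35)]
  have hb : b = -9/5 := by
    subst ha; nlinarith [sq_nonneg (b + 9/5)]
  subst ha hb
  -- Step 2: compute the misclassification measure
  set S : Set (ℝ × ℝ) := {p : ℝ × ℝ | p.2 ≠ (if 0 ≤ (72/35 : ℝ) * p.1 + (-9/5) then (1 : ℝ) else -1)} with hSdef
  have hmeas2 : Measurable (fun p : ℝ × ℝ => (72/35 : ℝ) * p.1 + (-9/5)) :=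
    (measurable_fst.const_mul _).add_const _
  have hC : MeasurableSet {p : ℝ × ℝ | 0 ≤ (72/35 : ℝ) * p.1 + (-9/5)} :=
    measurableSet_le measurable_const hmeas2
  have hite : Measurable (fun p : ℝ × ℝ => if 0 ≤ (72/35 : ℝ) * p.1 + (-9/5) then (1:ℝ) else -1) :=
    Measurable.ite hC measurable_const measurable_const
  have hS : MeasurableSet S := by
    have : MeasurableSet {p : ℝ × ℝ | p.2 = (if 0 ≤ (72/35 : ℝ) * p.1 + (-9/5) then (1:ℝ) else -1)} :=
      measurableSet_eq_fun measurable_snd hite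
    simpa [hSdef, Set.compl_setOf] using this.compl
  have hmapm : Measurable (fun x : ℝ => (x, (-1 : ℝ))) := by fun_prop
  have hdirac : Measure.dirac ((5/4 : ℝ), (1 : ℝ)) S = 0 := by
    rw [Measure.dirac_apply' _ hS]
    have : ((5/4 : ℝ), (1 : ℝ)) ∉ S := by
      simp only [hSdef, Set.mem_setOf_eq, ne_eq, not_not]
      rw [if_pos (by norm_num)]
    simp [Set.indicator_of_notMem this]
  have hpre : (fun x : ℝ => (x, (-1 : ℝ))) ⁻¹' S = Set.Ici (7/8 : ℝ) := by
    ext x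
    simp only [hSdef, Set.mem_preimage, Set.mem_setOf_eq, Set.mem_Ici, ne_eq]
    by_cases h : 0 ≤ (72/35 : ℝ) * x + (-9/5)
    · simp only [if_pos h]; norm_num; linarith
    · simp only [if_neg h]; norm_num; linarith
  have hmapS : Measure.map (fun x : ℝ => (x, (-1:ℝ))) (volume.restrict (Set.Icc (0:ℝ) 1)) S
      = ENNReal.ofReal (1/8) := by
    rw [Measure.map_apply hmapm hS, hpre, Measure.restrict_apply measurableSet_Ici]
    have : Set.Ici (7/8:ℝ) ∩ Set.Icc 0 1 = Set.Icc (7/8:ℝ) 1 := by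
      ext x; simp only [Set.mem_inter_iff, Set.mem_Ici, Set.mem_Icc]
      constructor
      · rintro ⟨h1, _, h3⟩; exact ⟨h1, h3⟩
      · rintro ⟨h1, h2⟩; exact ⟨h1, by linarith, h2⟩
    rw [this, Real.volume_Icc]
    norm_num
  have : exampleMeasure S = 1/16 := by
    rw [exampleMeasure, Measure.add_apply, Measure.smul_apply, Measure.smul_apply,
      hdirac, hmapS]
    rw [show ENNReal.ofReal (1/8) = (1/8 : ENNReal) by
      rw [show (1/8 : ℝ) = (8:ℝ)⁻¹ by norm_num, ENNReal.ofReal_inv_of_pos (by norm_num)]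
      norm_num]
    simp [smul_eq_mul]
    rw [show (2:ENNReal)⁻¹ * 8⁻¹ = 16⁻¹ by
      rw [← ENNReal.mul_inv (by norm_num) (by norm_num)]; norm_num]
  rw [this]
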